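/- The face F = Q ∩ H ∩ {t = -1/2}, where Q = [-1/2,1/2]^4 and H : x + y + z + t = 0, is the convex hull of the three points (1/2, -1/2, 1/2, -1/2), (1/2, 1/2, -1/2, -1/2), and (-1/2, 1/2, 1/2, -1/2), and these three points are affinely independent (so F is a nondegenerate triangle). -/

import Mathlib

theorem slice_triangle_face :
    {p : Fin 4 → ℝ | (∀ i, |p i| ≤ 1/2) ∧ p 0 + p 1 + p 2 + p 3 = 0 ∧ p 3 = -(1/2)}
      = convexHull ℝ {![1/2, -(1/2), 1/2, -(1/2)], ![1/2, 1/2, -(1/2), -(1/2)],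
          ![-(1/2), 1/2, 1/2, -(1/2)]} ∧
    AffineIndependent ℝ
      ![(![1/2, -(1/2), 1/2, -(1/2)] : Fin 4 → ℝ), ![1/2, 1/2, -(1/2), -(1/2)],
        ![-(1/2), 1/2, 1/2, -(1/2)]] := by
  constructor
  · apply Set.Subset.antisymm
    · rintro p ⟨hb, hsum, ht⟩
      have h0 := hb 0; have h1 := hb 1; have h2 := hb 2
      rw [abs_le] at h0 h1 h2
      set v : Fin 3 → (Fin 4 → ℝ) := ![![1/2, -(1/2), 1/2, -(1/2)], ![1/2, 1/2, -(1/2), -(1/2)],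
            ![-(1/2), 1/2, 1/2, -(1/2)]] with hv
      set w : Fin 3 → ℝ := ![1/2 - p 1, 1/2 - p 2, 1/2 - p 0] with hwdef
      have hp : p = ∑ i : Fin 3, w i • v i := by
        rw [Fin.sum_univ_three]
        funext j
        fin_cases j <;> simp [hwdef, hv] <;> linarith
      rw [hp]
      apply (convex_convexHull ℝ _).sum_mem
      · intro i _
        fin_cases i <;> simp [hwdef] <;> linarith
      · rw [Fin.sum_univ_three]; simp [hwdef]; linarith
      · intro i _
        apply subset_convexHull
        fin_cases i <;> simp [hv]
    · apply convexHull_min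
      · rintro q (rfl | rfl | rfl) <;>
          refine ⟨fun i => ?_, by simp only [Fin.sum_univ_four, Matrix.cons_val]; norm_num, by simp only [Matrix.cons_val]⟩ <;>
          fin_cases i <;> norm_num [abs_le]
      · rintro x ⟨hx, hxs, hxt⟩ y ⟨hy, hys, hyt⟩ a b ha hb hab
        refine ⟨fun i => ?_, ?_, ?_⟩
        · calc |(a • x + b • y) i| = |a * x i + b * y i| := by simp
            _ ≤ |a * x i| + |b * y i| := abs_add_le _ _
            _ = a * |x i| + b * |y i| := by
                rw [abs_mul, abs_mul, abs_of_nonneg ha, abs_of_nonneg hb]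
            _ ≤ a * (1/2) + b * (1/2) := by
                have := hx i; have := hy i; nlinarith
            _ = 1/2 := by linarith
        · simp only [Pi.add_apply, Pi.smul_apply, smul_eq_mul]; nlinarith
        · simp only [Pi.add_apply, Pi.smul_apply, smul_eq_mul]; nlinarith
  · rw [affineIndependent_iff_of_fintype]
    intro w hs hw
    rw [Finset.weightedVSub_apply] at hw
    have h0 := congrFun hw 0
    have h1 := congrFun hw 1
    simp [Fin.sum_univ_succ] at h0 h1
    have hs' : w 0 + w 1 + w 2 = 0 := by linarith [Fin.sum_univ_three w ▸ hs]
    set c0 := (Classical.choice (AddTorsor.nonempty : Nonempty (Fin 4 → ℝ)) : Fin 4 → ℝ) 0 with hc0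
    set c1 := (Classical.choice (AddTorsor.nonempty : Nonempty (Fin 4 → ℝ)) : Fin 4 → ℝ) 1 with hc1
    have e0 : w 0 + w 1 - w 2 = 0 := by linear_combination 2*h0 + 2*c0*hs'
    have e1 : -(w 0) + w 1 + w 2 = 0 := by linear_combination 2*h1 + 2*c1*hs'
    intro i
    fin_cases i <;> simp <;> linarith
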